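/- If J is a classical universal solution of I w.r.t. a setting S and Q is a positive query, then the supported certain answers to Q over I w.r.t. S equal the null-free answers of Q on J, i.e., scert(I,Q,S) = Q(J) ∩ Const^ar(Q). -/

import Mathlib

namespace DE

abbrev Var := ℕ

inductive Term (C : Type) where
  | const : C → Term C
  | null : ℕ → Term C

structure Atom (R C : Type) where
  rel : R
  args : List (Var ⊕ C)

structure Fact (R C : Type) where
  rel : R
  args : List (Term C)

abbrev Instance (R C : Type) := Set (Fact R C)

def termOf {C : Type} (h : Var → Term C) : Var ⊕ C → Term C
  | Sum.inl v => h v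
  | Sum.inr c => Term.const c

def applyAtom {R C : Type} (h : Var → Term C) (a : Atom R C) : Fact R C :=
  ⟨a.rel, a.args.map (termOf h)⟩

/-- `h` maps every atom of `as` into the instance `I`. -/
def holdsBody {R C : Type} (I : Instance R C) (h : Var → Term C)
    (as : List (Atom R C)) : Prop :=
  ∀ a ∈ as, applyAtom h a ∈ I

/-- A tuple-generating dependency. -/
structure TGD (R C : Type) where
  body : List (Atom R C)
  head : List (Atom R C)
  frontier : List Var
  exvars : List Var

def varsOf {R C : Type} (as : List (Atom R C)) : Set Var :=
  {v | ∃ a ∈ as, (Sum.inl v : Var ⊕ C) ∈ a.args}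

/-- Well-formedness of a TGD: frontier variables occur in the body, existential
variables do not, and every head variable is a frontier or existential variable. -/
def TGD.wf {R C : Type} (ρ : TGD R C) : Prop :=
  (∀ v ∈ ρ.frontier, v ∈ varsOf ρ.body) ∧
  (∀ z ∈ ρ.exvars, z ∉ varsOf ρ.body) ∧
  (∀ v ∈ varsOf ρ.head, v ∈ ρ.frontier ∨ v ∈ ρ.exvars)

/-- Satisfaction of a TGD by an instance. -/
def satTGD {R C : Type} (I : Instance R C) (ρ : TGD R C) : Prop :=
  ∀ h : Var → Term C, holdsBody I h ρ.body →
    ∃ h' : Var → Term C, (∀ v ∈ varsOf ρ.body, h' v = h v) ∧ holdsBody I h' ρ.head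

/-- An equality-generating dependency. -/
structure EGD (R C : Type) where
  body : List (Atom R C)
  lhs : Var
  rhs : Var

def satEGD {R C : Type} (I : Instance R C) (η : EGD R C) : Prop :=
  ∀ h : Var → Term C, holdsBody I h η.body → h η.lhs = h η.rhs

/-- An ex-choice: given a TGD and a tuple of constants for its frontier,
a constant for each existential variable. -/
abbrev ExChoice (R C : Type) := TGD R C → List C → Var → C

def constHom {C : Type} (h : Var → C) : Var → Term C := fun v => Term.const (h v)

/-- `I` satisfies all ground versions of the TGD `ρ` that are coherent with `γ`. -/
def satTGDcoh {R C : Type} (I : Instance R C) (γ : ExChoice R C) (ρ : TGD R C) : Prop :=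
  ∀ h : Var → C, (∀ z ∈ ρ.exvars, h z = γ ρ (ρ.frontier.map h) z) →
    holdsBody I (constHom h) ρ.body → holdsBody I (constHom h) ρ.head

/-- A data exchange setting: source-to-target TGDs, target TGDs, target EGDs. -/
structure Setting (R C : Type) where
  sigmaST : List (TGD R C)
  sigmaT : List (TGD R C)
  sigmaE : List (EGD R C)

def Setting.wf {R C : Type} (S : Setting R C) : Prop :=
  ∀ ρ ∈ S.sigmaST ++ S.sigmaT, ρ.wf

/-- Classical solution: `I ∪ J` satisfies `Σst` and `J` satisfies `Σt`. -/
def classicalSolution {R C : Type} (S : Setting R C) (I J : Instance R C) : Prop :=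
  J.Finite ∧ (∀ ρ ∈ S.sigmaST, satTGD (I ∪ J) ρ) ∧
    (∀ ρ ∈ S.sigmaT, satTGD J ρ) ∧ (∀ η ∈ S.sigmaE, satEGD J η)

def supportedWith {R C : Type} (S : Setting R C) (γ : ExChoice R C)
    (I J : Instance R C) : Prop :=
  (∀ ρ ∈ S.sigmaST, satTGDcoh (I ∪ J) γ ρ) ∧
    (∀ ρ ∈ S.sigmaT, satTGDcoh J γ ρ) ∧ (∀ η ∈ S.sigmaE, satEGD J η)

/-- Supported solution: for some ex-choice `γ`, `I ∪ J` satisfies `Σst^γ`,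
`J` satisfies `Σt^γ`, and no proper subset of `J` does. -/
def supportedSolution {R C : Type} (S : Setting R C) (I J : Instance R C) : Prop :=
  J.Finite ∧ ∃ γ : ExChoice R C, supportedWith S γ I J ∧
    ∀ J' : Instance R C, J' ⊂ J → ¬ supportedWith S γ I J'

/-- An instance without labeled nulls (a database). -/
def nullFree {R C : Type} (I : Instance R C) : Prop :=
  ∀ f ∈ I, ∀ t ∈ f.args, ∃ c : C, t = Term.const c

end DE

namespace DE

/-- A conjunctive query with body atoms and a tuple of free variables. -/
structure CQ (R C : Type) where
  body : List (Atom R C)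
  free : List Var

def CQ.safe {R C : Type} (q : CQ R C) : Prop := ∀ v ∈ q.free, v ∈ varsOf q.body

def evalCQ {R C : Type} (q : CQ R C) (J : Instance R C) : Set (List (Term C)) :=
  {t | ∃ h : Var → Term C, holdsBody J h q.body ∧ t = q.free.map h}

/-- Output of a union of conjunctive queries (positive query). -/
def evalUCQ {R C : Type} (Q : List (CQ R C)) (J : Instance R C) : Set (List (Term C)) :=
  {t | ∃ q ∈ Q, t ∈ evalCQ q J}

/-- Classical certain answers. -/
def cert {R C : Type} (S : Setting R C) (I : Instance R C) (Q : List (CQ R C)) :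
    Set (List (Term C)) :=
  {t | ∀ J, classicalSolution S I J → t ∈ evalUCQ Q J}

/-- Supported certain answers. -/
def scert {R C : Type} (S : Setting R C) (I : Instance R C) (Q : List (CQ R C)) :
    Set (List (Term C)) :=
  {t | ∀ J, supportedSolution S I J → t ∈ evalUCQ Q J}

end DE

namespace DE

def constsOfAtoms {R C : Type} (as : List (Atom R C)) : Set C :=
  {c | ∃ a ∈ as, (Sum.inr c : Var ⊕ C) ∈ a.args}

def constsOfTGD {R C : Type} (ρ : TGD R C) : Set C :=
  constsOfAtoms ρ.body ∪ constsOfAtoms ρ.head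

def constsOfEGD {R C : Type} (η : EGD R C) : Set C := constsOfAtoms η.body

def constsOfSetting {R C : Type} (S : Setting R C) : Set C :=
  {c | ∃ ρ ∈ S.sigmaST ++ S.sigmaT, c ∈ constsOfTGD ρ} ∪
    {c | ∃ η ∈ S.sigmaE, c ∈ constsOfEGD η}

def constsOfInstance {R C : Type} (I : Instance R C) : Set C :=
  {c | ∃ f ∈ I, Term.const c ∈ f.args}

/-- Replace each labeled null by a constant according to `r`. -/
def renameTerm {C : Type} (r : ℕ → C) : Term C → Term C
  | Term.null n => Term.const (r n)
  | Term.const c => Term.const c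

def renameFact {R C : Type} (r : ℕ → C) (f : Fact R C) : Fact R C :=
  ⟨f.rel, f.args.map (renameTerm r)⟩

/-- Active domain of an instance. -/
def adom {R C : Type} (J : Instance R C) : Set (Term C) := {t | ∃ f ∈ J, t ∈ f.args}

def mapFact {R C : Type} (h : Term C → Term C) (f : Fact R C) : Fact R C :=
  ⟨f.rel, f.args.map h⟩

end DE

namespace DE

def isHom {R C : Type} (h : Term C → Term C) (J J' : Instance R C) : Prop :=
  (∀ c : C, h (Term.const c) = Term.const c) ∧ ∀ f ∈ J, mapFact h f ∈ J'

/-- A (classical) universal solution. -/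
def universalSolution {R C : Type} (S : Setting R C) (I J : Instance R C) : Prop :=
  classicalSolution S I J ∧
    ∀ J' : Instance R C, classicalSolution S I J' → ∃ h : Term C → Term C, isHom h J J'

end DE
namespace DE
section Aux
variable {R C : Type}

theorem term_const_inj : Function.Injective (Term.const : C → Term C) := by
  intro a b h; injection h

theorem applyAtom_congr {h h' : Var → Term C} {a : Atom R C}
    (H : ∀ v, (Sum.inl v : Var ⊕ C) ∈ a.args → h v = h' v) :
    applyAtom h a = applyAtom h' a := by
  unfold applyAtom
  congr 1
  apply List.map_congr_left
  intro x hx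
  cases x with
  | inl v => simpa [termOf] using H v hx
  | inr c => rfl

theorem holdsBody_congr {I : Instance R C} {h h' : Var → Term C} {as : List (Atom R C)}
    (H : ∀ v ∈ varsOf (C := C) as, h v = h' v) (hb : holdsBody I h as) :
    holdsBody I h' as := by
  intro a ha
  rw [← applyAtom_congr (fun v hv => H v ⟨a, ha, hv⟩)]
  exact hb a ha

theorem mem_args_applyAtom {h : Var → Term C} {a : Atom R C} {v : Var}
    (hv : (Sum.inl v : Var ⊕ C) ∈ a.args) : h v ∈ (applyAtom h a).args :=
  List.mem_map.2 ⟨Sum.inl v, hv, rfl⟩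

theorem holdsBody_var_const {K : Instance R C} (hK : nullFree K) {h : Var → Term C}
    {as : List (Atom R C)} (hb : holdsBody K h as) {v : Var} (hv : v ∈ varsOf (C := C) as) :
    ∃ c, h v = Term.const c := by
  obtain ⟨a, ha, hva⟩ := hv
  exact hK _ (hb a ha) (h v) (mem_args_applyAtom hva)

theorem nullFree_union {I K : Instance R C} (hI : nullFree I) (hK : nullFree K) :
    nullFree (I ∪ K) := by
  intro f hf; cases hf with
  | inl h => exact hI f h
  | inr h => exact hK f h

theorem holdsBody_mono {K K' : Instance R C} (hKK : K ⊆ K') {h : Var → Term C}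
    {as : List (Atom R C)} (hb : holdsBody K h as) : holdsBody K' h as :=
  fun a ha => hKK (hb a ha)

theorem groundFact_applyAtom_constHom {h : Var → C} {a : Atom R C} :
    ∀ t ∈ (applyAtom (constHom h) a).args, ∃ c, t = Term.const c := by
  intro t ht
  obtain ⟨x, _, rfl⟩ := List.mem_map.1 ht
  cases x with
  | inl v => exact ⟨h v, rfl⟩
  | inr c => exact ⟨c, rfl⟩

/-- Every supported solution is null-free. -/
theorem supported_nullFree {S : Setting R C} {I Js : Instance R C}
    (hsup : supportedSolution S I Js) : nullFree Js := by
  obtain ⟨hfin, γ, hw, hmin⟩ := hsup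
  set G : Instance R C := {f ∈ Js | ∀ t ∈ f.args, ∃ c, t = Term.const c} with hG
  have hGsub : G ⊆ Js := fun f hf => hf.1
  have hsw : supportedWith S γ I G := by
    refine ⟨?_, ?_, ?_⟩
    · intro ρ hρ h hcoh hb
      intro a ha
      have hb' : holdsBody (I ∪ Js) (constHom h) ρ.body :=
        holdsBody_mono (Set.union_subset_union_right I hGsub) hb
      rcases hw.1 ρ hρ h hcoh hb' a ha with hI | hJ
      · exact Or.inl hI
      · exact Or.inr ⟨hJ, groundFact_applyAtom_constHom⟩
    · intro ρ hρ h hcoh hb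
      intro a ha
      have hb' : holdsBody Js (constHom h) ρ.body := holdsBody_mono hGsub hb
      exact ⟨hw.2.1 ρ hρ h hcoh hb' a ha, groundFact_applyAtom_constHom⟩
    · intro η hη h hb
      exact hw.2.2 η hη h (holdsBody_mono hGsub hb)
  have hGeq : G = Js := by
    by_contra hne
    exact hmin G (ssubset_of_subset_of_ne hGsub hne) hsw
  intro f hf
  rw [← hGeq] at hf
  exact hf.2

end Aux
end DE
namespace DE
section Aux2
variable {R C : Type}

theorem satTGD_of_coh [Nonempty C] {K : Instance R C} {γ : ExChoice R C} {ρ : TGD R C}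
    (hwf : ρ.wf) (hK : nullFree K) (hc : satTGDcoh K γ ρ) : satTGD K ρ := by
  classical
  intro h hb
  obtain ⟨hf, hex, hhd⟩ := hwf
  have hconst : ∀ v ∈ varsOf (C := C) ρ.body, ∃ c, h v = Term.const c :=
    fun v hv => holdsBody_var_const hK hb hv
  set g : Var → C := fun v =>
    if hv : ∃ c, h v = Term.const c then hv.choose else Classical.arbitrary C with hgdef
  have hg : ∀ v ∈ varsOf (C := C) ρ.body, h v = Term.const (g v) := by
    intro v hv
    have hc' := hconst v hv
    simp only [hgdef, dif_pos hc']
    exact hc'.choose_spec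
  set g2 : Var → C := fun v =>
    if v ∈ ρ.exvars then γ ρ (ρ.frontier.map g) v else g v with hg2def
  have hg2body : ∀ v ∈ varsOf (C := C) ρ.body, g2 v = g v := by
    intro v hv
    simp only [hg2def]
    rw [if_neg (fun hvz => hex v hvz hv)]
  have hfr : ρ.frontier.map g2 = ρ.frontier.map g :=
    List.map_congr_left (fun v hv => hg2body v (hf v hv))
  have hcoh : ∀ z ∈ ρ.exvars, g2 z = γ ρ (ρ.frontier.map g2) z := by
    intro z hz
    rw [hfr]
    simp only [hg2def, if_pos hz]
  have hb2 : holdsBody K (constHom g2) ρ.body := by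
    apply holdsBody_congr (h := h) ?_ hb
    intro v hv
    rw [hg v hv]
    show Term.const (g v) = Term.const (g2 v)
    rw [hg2body v hv]
  have hh := hc g2 hcoh hb2
  refine ⟨fun v => if v ∈ varsOf (C := C) ρ.body then h v else constHom g2 v, ?_, ?_⟩
  · intro v hv; simp [if_pos hv]
  · apply holdsBody_congr (h := constHom g2) ?_ hh
    intro v _
    by_cases hvb : v ∈ varsOf (C := C) ρ.body
    · simp only [if_pos hvb]
      rw [hg v hvb]
      show Term.const (g2 v) = Term.const (g v)
      rw [hg2body v hvb]
    · simp only [if_neg hvb]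

theorem classical_of_supported [Nonempty C] {S : Setting R C} (hS : S.wf)
    {I Js : Instance R C} (hI : nullFree I) (hsup : supportedSolution S I Js) :
    classicalSolution S I Js := by
  have hnf : nullFree Js := supported_nullFree hsup
  obtain ⟨hfin, γ, hw, _⟩ := hsup
  refine ⟨hfin, ?_, ?_, hw.2.2⟩
  · intro ρ hρ
    exact satTGD_of_coh (hS ρ (List.mem_append.2 (Or.inl hρ))) (nullFree_union hI hnf)
      (hw.1 ρ hρ)
  · intro ρ hρ
    exact satTGD_of_coh (hS ρ (List.mem_append.2 (Or.inr hρ))) hnf (hw.2.1 ρ hρ)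

end Aux2
end DE
namespace DE
section Aux3
variable {R C : Type}

open Classical in
/-- Extract the constant from a term (junk on nulls). -/
noncomputable def ec [Nonempty C] : Term C → C := fun t =>
  if h : ∃ c, t = Term.const c then h.choose else Classical.arbitrary C

theorem ec_const [Nonempty C] (c : C) : ec (Term.const c : Term C) = c := by
  have h : ∃ c', (Term.const c : Term C) = Term.const c' := ⟨c, rfl⟩
  simp only [ec, dif_pos h]
  have := h.choose_spec
  exact (term_const_inj this).symm

/-- Witness predicate: `h'` has frontier values `fr` and maps the head into `K'`. -/
def Wpred (K' : Instance R C) (ρ : TGD R C) (fr : List C) (h' : Var → Term C) : Prop :=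
  ρ.frontier.map h' = fr.map Term.const ∧ holdsBody K' h' ρ.head

open Classical in
noncomputable def gammaOf [Nonempty C] (I K : Instance R C) : ExChoice R C := fun ρ fr z =>
  if h1 : ∃ h', Wpred K ρ fr h' then ec (h1.choose z)
  else if h2 : ∃ h', Wpred (I ∪ K) ρ fr h' then ec (h2.choose z)
  else Classical.arbitrary C

theorem gammaOf_pos1 [Nonempty C] {I K : Instance R C} {ρ : TGD R C} {fr : List C}
    (h1 : ∃ h', Wpred K ρ fr h') (z : Var) :
    gammaOf I K ρ fr z = ec (h1.choose z) := by
  simp only [gammaOf, dif_pos h1]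

theorem gammaOf_pos2 [Nonempty C] {I K : Instance R C} {ρ : TGD R C} {fr : List C}
    (h1 : ¬ ∃ h', Wpred K ρ fr h') (h2 : ∃ h', Wpred (I ∪ K) ρ fr h') (z : Var) :
    gammaOf I K ρ fr z = ec (h2.choose z) := by
  simp only [gammaOf, dif_neg h1, dif_pos h2]

/-- From a classical TGD satisfaction and a ground body match, a `Wpred` witness exists. -/
theorem exists_Wpred {K2 : Instance R C} {ρ : TGD R C} (hwf : ρ.wf) (hsat : satTGD K2 ρ)
    {h : Var → C} (hb : holdsBody K2 (constHom h) ρ.body) :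
    ∃ h', Wpred K2 ρ (ρ.frontier.map h) h' := by
  obtain ⟨h', hagree, hhead⟩ := hsat (constHom h) hb
  refine ⟨h', ?_, hhead⟩
  rw [List.map_map]
  exact List.map_congr_left (fun v hv => hagree v (hwf.1 v hv))

/-- Transfer the head along a `Wpred` witness to a coherent ground assignment. -/
theorem head_of_Wpred {K2 : Instance R C} {ρ : TGD R C} (hwf : ρ.wf)
    {h : Var → C} {h' : Var → Term C} (hW : Wpred K2 ρ (ρ.frontier.map h) h')
    (hz : ∀ z ∈ ρ.exvars, z ∈ varsOf (C := C) ρ.head → Term.const (h z) = h' z) :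
    holdsBody K2 (constHom h) ρ.head := by
  apply holdsBody_congr (h := h') ?_ hW.2
  intro v hv
  rcases hwf.2.2 v hv with hvf | hvz
  · have heq : ρ.frontier.map h' = ρ.frontier.map (fun v => Term.const (h v)) := by
      rw [hW.1, List.map_map]; rfl
    exact List.map_inj_left.mp heq v hvf
  · exact (hz v hvz hv).symm

theorem exists_supported_subset [Nonempty C] {S : Setting R C} (hS : S.wf)
    {I K : Instance R C} (hI : nullFree I) (hK : classicalSolution S I K)
    (hKnf : nullFree K) :
    ∃ K' : Instance R C, K' ⊆ K ∧ supportedSolution S I K' := by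
  classical
  obtain ⟨hfin, hST, hT, hE⟩ := hK
  set γ : ExChoice R C := gammaOf I K with hγ
  -- head containment for the chosen witness in a null-free instance
  have main : ∀ (K2 : Instance R C), nullFree K2 → ∀ (ρ : TGD R C), ρ.wf →
      ∀ (h : Var → C) (hW : ∃ h', Wpred K2 ρ (ρ.frontier.map h) h'),
      (∀ z ∈ ρ.exvars, Term.const (h z) = Term.const (ec (hW.choose z))) →
      holdsBody K2 (constHom h) ρ.head := by
    intro K2 hK2 ρ hwf h hW hcoh
    apply head_of_Wpred hwf hW.choose_spec
    intro z hz1 hz2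
    obtain ⟨c, hc⟩ := holdsBody_var_const hK2 hW.choose_spec.2 hz2
    rw [hcoh z hz1, hc, ec_const]
  have hsw : supportedWith S γ I K := by
    refine ⟨?_, ?_, hE⟩
    · intro ρ hρ h hcoh hb
      have hwf := hS ρ (List.mem_append.2 (Or.inl hρ))
      by_cases h1 : ∃ h', Wpred K ρ (ρ.frontier.map h) h'
      · have := main K hKnf ρ hwf h h1 (fun z hz => by
          rw [← gammaOf_pos1 h1 z, ← hγ, ← hcoh z hz])
        exact holdsBody_mono Set.subset_union_right this
      · have h2 : ∃ h', Wpred (I ∪ K) ρ (ρ.frontier.map h) h' :=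
          exists_Wpred hwf (hST ρ hρ) hb
        exact main (I ∪ K) (nullFree_union hI hKnf) ρ hwf h h2 (fun z hz => by
          rw [← gammaOf_pos2 h1 h2 z, ← hγ, ← hcoh z hz])
    · intro ρ hρ h hcoh hb
      have hwf := hS ρ (List.mem_append.2 (Or.inr hρ))
      have h1 : ∃ h', Wpred K ρ (ρ.frontier.map h) h' := exists_Wpred hwf (hT ρ hρ) hb
      exact main K hKnf ρ hwf h h1 (fun z hz => by
        rw [← gammaOf_pos1 h1 z, ← hγ, ← hcoh z hz])
  -- minimize
  have hex : ∃ n, ∃ K' : Instance R C, K' ⊆ K ∧ supportedWith S γ I K' ∧ K'.ncard = n :=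
    ⟨K.ncard, K, subset_rfl, hsw, rfl⟩
  obtain ⟨K', hsub, hsw', hcard⟩ := Nat.find_spec hex
  refine ⟨K', hsub, hfin.subset hsub, γ, hsw', ?_⟩
  intro J' hJ' hswJ'
  have hlt : J'.ncard < Nat.find hex := by
    rw [← hcard]
    exact Set.ncard_lt_ncard hJ' (hfin.subset hsub)
  exact Nat.find_min hex hlt ⟨J', hJ'.subset.trans hsub, hswJ', rfl⟩

end Aux3
end DE
namespace DE
section Aux4
variable {R C : Type}

open Classical in
/-- Inverse of `renameTerm r`: maps fresh constants back to nulls. -/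
noncomputable def gInv (r : ℕ → C) : Term C → Term C := fun t =>
  if h : ∃ n, t = Term.const (r n) then Term.null h.choose else t

theorem gInv_const_of_not {r : ℕ → C} {c : C} (hc : c ∉ Set.range r) :
    gInv r (Term.const c) = Term.const c := by
  have h : ¬ ∃ n, (Term.const c : Term C) = Term.const (r n) := by
    rintro ⟨n, hn⟩
    exact hc ⟨n, (term_const_inj hn).symm⟩
  simp only [gInv, dif_neg h]

theorem gInv_null (r : ℕ → C) (n : ℕ) : gInv r (Term.null n : Term C) = Term.null n := by
  have h : ¬ ∃ m, (Term.null n : Term C) = Term.const (r m) := by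
    rintro ⟨m, hm⟩; cases hm
  simp only [gInv, dif_neg h]

theorem gInv_const_range {r : ℕ → C} (hr : Function.Injective r) (n : ℕ) :
    gInv r (Term.const (r n)) = Term.null n := by
  have h : ∃ m, (Term.const (r n) : Term C) = Term.const (r m) := ⟨n, rfl⟩
  simp only [gInv, dif_pos h]
  have := h.choose_spec
  rw [hr (term_const_inj this).symm]

theorem renameTerm_gInv_const (r : ℕ → C) (c : C) :
    renameTerm r (gInv r (Term.const c)) = Term.const c := by
  by_cases h : ∃ n, (Term.const c : Term C) = Term.const (r n)
  · simp only [gInv, dif_pos h]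
    rw [show renameTerm r (Term.null h.choose) = Term.const (r h.choose) from rfl]
    exact h.choose_spec.symm
  · simp only [gInv, dif_neg h]
    rfl

theorem gInv_const_inj {r : ℕ → C} (hr : Function.Injective r) {c₁ c₂ : C}
    (h : gInv r (Term.const c₁) = gInv r (Term.const c₂)) : c₁ = c₂ := by
  have := congrArg (renameTerm r) h
  rw [renameTerm_gInv_const, renameTerm_gInv_const] at this
  exact term_const_inj this

theorem gInv_renameTerm {r : ℕ → C} (hr : Function.Injective r) {t : Term C}
    (ht : ∀ c, t = Term.const c → c ∉ Set.range r) : gInv r (renameTerm r t) = t := by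
  cases t with
  | null n => exact gInv_const_range hr n
  | const c => exact gInv_const_of_not (ht c rfl)

theorem mapFact_gInv_renameFact {r : ℕ → C} (hr : Function.Injective r) {f : Fact R C}
    (hf : ∀ c, Term.const c ∈ f.args → c ∉ Set.range r) :
    mapFact (gInv r) (renameFact r f) = f := by
  unfold mapFact renameFact
  cases f with
  | mk rel args =>
    simp only [List.map_map, Fact.mk.injEq, true_and]
    rw [show args.map (gInv r ∘ renameTerm r) = args.map id by
      apply List.map_congr_left
      intro t ht
      exact gInv_renameTerm hr (fun c hc => hf c (hc ▸ ht)), List.map_id]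

theorem nullFree_rename (r : ℕ → C) (K : Instance R C) :
    nullFree ((renameFact r) '' K) := by
  rintro f ⟨g, _, rfl⟩ t ht
  obtain ⟨s, _, rfl⟩ := List.mem_map.1 ht
  cases s with
  | null n => exact ⟨r n, rfl⟩
  | const c => exact ⟨c, rfl⟩

theorem applyAtom_gInv_comp {r : ℕ → C} {h : Var → Term C} {a : Atom R C}
    (ha : ∀ c, (Sum.inr c : Var ⊕ C) ∈ a.args → c ∉ Set.range r) :
    applyAtom (gInv r ∘ h) a = mapFact (gInv r) (applyAtom h a) := by
  unfold applyAtom mapFact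
  simp only [List.map_map, Fact.mk.injEq, true_and]
  apply List.map_congr_left
  intro x hx
  cases x with
  | inl v => rfl
  | inr c => exact (gInv_const_of_not (ha c hx)).symm

theorem applyAtom_renameTerm_comp (r : ℕ → C) (h : Var → Term C) (a : Atom R C) :
    applyAtom (renameTerm r ∘ h) a = renameFact r (applyAtom h a) := by
  unfold applyAtom renameFact
  simp only [List.map_map, Fact.mk.injEq, true_and]
  apply List.map_congr_left
  intro x hx
  cases x with
  | inl v => rfl
  | inr c => rfl

theorem holdsBody_gInv {r : ℕ → C} (hr : Function.Injective r) {K : Instance R C}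
    (hKc : ∀ c ∈ constsOfInstance K, c ∉ Set.range r) {h : Var → Term C}
    {as : List (Atom R C)} (hac : ∀ c ∈ constsOfAtoms as, c ∉ Set.range r)
    (hb : holdsBody ((renameFact r) '' K) h as) : holdsBody K (gInv r ∘ h) as := by
  intro a ha
  rw [applyAtom_gInv_comp (fun c hc => hac c ⟨a, ha, hc⟩)]
  obtain ⟨f, hfK, hfe⟩ := hb a ha
  rw [← hfe, mapFact_gInv_renameFact hr (fun c hc => hKc c ⟨f, hfK, hc⟩)]
  exact hfK

theorem satTGD_rename {r : ℕ → C} (hr : Function.Injective r) {K : Instance R C}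
    {ρ : TGD R C} (hKc : ∀ c ∈ constsOfInstance K, c ∉ Set.range r)
    (hρc : ∀ c ∈ constsOfTGD ρ, c ∉ Set.range r) (hsat : satTGD K ρ) :
    satTGD ((renameFact r) '' K) ρ := by
  intro h hb
  have hb' : holdsBody K (gInv r ∘ h) ρ.body :=
    holdsBody_gInv hr hKc (fun c hc => hρc c (Or.inl hc)) hb
  obtain ⟨h', hag, hhd⟩ := hsat _ hb'
  refine ⟨renameTerm r ∘ h', ?_, ?_⟩
  · intro v hv
    show renameTerm r (h' v) = h v
    rw [hag v hv]
    obtain ⟨c, hc⟩ := holdsBody_var_const (nullFree_rename r K) hb hv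
    show renameTerm r (gInv r (h v)) = h v
    rw [hc]
    exact renameTerm_gInv_const r c
  · intro a ha
    rw [applyAtom_renameTerm_comp]
    exact ⟨_, hhd a ha, rfl⟩

theorem holdsBody_update_notMem {K : Instance R C} {h : Var → Term C}
    {as : List (Atom R C)} (hb : holdsBody K h as) {x : Var}
    (hx : x ∉ varsOf (C := C) as) (t : Term C) :
    holdsBody K (Function.update h x t) as := by
  apply holdsBody_congr (h := h) ?_ hb
  intro v hv
  rw [Function.update_of_ne (show v ≠ x from fun he => hx (he ▸ hv))]

theorem satEGD_rename [Nonempty C] {r : ℕ → C} (hr : Function.Injective r)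
    {K : Instance R C} {η : EGD R C} (hKc : ∀ c ∈ constsOfInstance K, c ∉ Set.range r)
    (hηc : ∀ c ∈ constsOfEGD η, c ∉ Set.range r) (hsat : satEGD K η) :
    satEGD ((renameFact r) '' K) η := by
  intro h hb
  have hb' : holdsBody K (gInv r ∘ h) η.body := holdsBody_gInv hr hKc hηc hb
  by_cases heq : η.lhs = η.rhs
  · rw [heq]
  by_cases hl : η.lhs ∈ varsOf (C := C) η.body
  · by_cases hrh : η.rhs ∈ varsOf (C := C) η.body
    · obtain ⟨c₁, hc₁⟩ := holdsBody_var_const (nullFree_rename r K) hb hl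
      obtain ⟨c₂, hc₂⟩ := holdsBody_var_const (nullFree_rename r K) hb hrh
      have := hsat _ hb'
      simp only [Function.comp] at this
      rw [hc₁, hc₂] at this
      rw [hc₁, hc₂, gInv_const_inj hr this]
    · exfalso
      have e₁ := hsat _ (holdsBody_update_notMem hb' hrh (Term.const (Classical.arbitrary C)))
      have e₂ := hsat _ (holdsBody_update_notMem hb' hrh (Term.null 0))
      rw [Function.update_self, Function.update_of_ne heq] at e₁ e₂
      cases (e₁.symm.trans e₂)
  · exfalso
    have e₁ := hsat _ (holdsBody_update_notMem hb' hl (Term.const (Classical.arbitrary C)))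
    have e₂ := hsat _ (holdsBody_update_notMem hb' hl (Term.null 0))
    rw [Function.update_self, Function.update_of_ne (Ne.symm heq)] at e₁ e₂
    cases (e₁.trans e₂.symm)

end Aux4
end DE
namespace DE
section Aux5
variable {R C : Type}

theorem finite_constsOfAtoms (as : List (Atom R C)) : (constsOfAtoms (R := R) as).Finite := by
  apply Set.Finite.subset
    (Set.Finite.biUnion (as.finite_toSet)
      (fun a _ => (a.args.finite_toSet).preimage ((Sum.inr_injective).injOn)))
  rintro c ⟨a, ha, hc⟩
  exact Set.mem_biUnion ha hc

theorem finite_constsOfInstance {K : Instance R C} (hK : K.Finite) :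
    (constsOfInstance K).Finite := by
  apply Set.Finite.subset
    (Set.Finite.biUnion hK (fun f _ => (f.args.finite_toSet).preimage (term_const_inj.injOn)))
  rintro c ⟨f, hf, hc⟩
  exact Set.mem_biUnion hf hc

theorem finite_constsOfSetting (S : Setting R C) : (constsOfSetting S).Finite := by
  apply Set.Finite.union
  · apply Set.Finite.subset
      (Set.Finite.biUnion ((S.sigmaST ++ S.sigmaT).finite_toSet)
        (fun ρ _ => (finite_constsOfAtoms ρ.body).union (finite_constsOfAtoms ρ.head)))
    rintro c ⟨ρ, hρ, hc⟩
    exact Set.mem_biUnion hρ hc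
  · apply Set.Finite.subset
      (Set.Finite.biUnion (S.sigmaE.finite_toSet) (fun η _ => finite_constsOfAtoms η.body))
    rintro c ⟨η, hη, hc⟩
    exact Set.mem_biUnion hη hc

theorem evalUCQ_mono {Q : List (CQ R C)} {K K' : Instance R C} (h : K ⊆ K')
    {t : List (Term C)} (ht : t ∈ evalUCQ Q K) : t ∈ evalUCQ Q K' := by
  obtain ⟨q, hq, hh, hb, hteq⟩ := ht
  exact ⟨q, hq, hh, holdsBody_mono h hb, hteq⟩

theorem image_renameFact_nullFree {K : Instance R C} (hK : nullFree K) (r : ℕ → C) :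
    (renameFact r) '' K = K := by
  have : Set.EqOn (renameFact r) id K := by
    intro f hf
    show renameFact r f = f
    unfold renameFact
    cases f with
    | mk rel args =>
      simp only [Fact.mk.injEq, true_and]
      rw [show args.map (renameTerm r) = args.map id by
        apply List.map_congr_left
        intro t ht
        obtain ⟨c, rfl⟩ := hK _ hf t ht
        rfl, List.map_id]
  rw [Set.EqOn.image_eq this, Set.image_id]

theorem constsOfInstance_union (I K : Instance R C) :
    constsOfInstance (I ∪ K) ⊆ constsOfInstance I ∪ constsOfInstance K := by
  rintro c ⟨f, hf, hc⟩
  cases hf with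
  | inl h => exact Or.inl ⟨f, h, hc⟩
  | inr h => exact Or.inr ⟨f, h, hc⟩

/-- Renaming nulls to fresh constants preserves being a classical solution. -/
theorem classicalSolution_rename [Nonempty C] {S : Setting R C} {I J : Instance R C}
    (hI : nullFree I) {r : ℕ → C} (hr : Function.Injective r)
    (hrS : ∀ c ∈ constsOfSetting S, c ∉ Set.range r)
    (hrI : ∀ c ∈ constsOfInstance I, c ∉ Set.range r)
    (hrJ : ∀ c ∈ constsOfInstance J, c ∉ Set.range r)
    (hJ : classicalSolution S I J) :
    classicalSolution S I ((renameFact r) '' J) := by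
  obtain ⟨hfin, hST, hT, hE⟩ := hJ
  have hIJc : ∀ c ∈ constsOfInstance (I ∪ J), c ∉ Set.range r := by
    intro c hc
    cases constsOfInstance_union I J hc with
    | inl h => exact hrI c h
    | inr h => exact hrJ c h
  have himg : (renameFact r) '' (I ∪ J) = I ∪ (renameFact r) '' J := by
    rw [Set.image_union, image_renameFact_nullFree hI]
  refine ⟨hfin.image _, ?_, ?_, ?_⟩
  · intro ρ hρ
    have := satTGD_rename hr hIJc
      (fun c hc => hrS c (Or.inl ⟨ρ, List.mem_append.2 (Or.inl hρ), hc⟩)) (hST ρ hρ)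
    rwa [himg] at this
  · intro ρ hρ
    exact satTGD_rename hr hrJ
      (fun c hc => hrS c (Or.inl ⟨ρ, List.mem_append.2 (Or.inr hρ), hc⟩)) (hT ρ hρ)
  · intro η hη
    exact satEGD_rename hr hrJ (fun c hc => hrS c (Or.inr ⟨η, hη, hc⟩)) (hE η hη)

theorem adom_rename {r : ℕ → C} {K : Instance R C} {x : Term C}
    (hx : x ∈ adom ((renameFact r) '' K)) :
    ∃ c, x = Term.const c ∧ (c ∈ constsOfInstance K ∨ c ∈ Set.range r) := by
  obtain ⟨f', ⟨f, hfK, rfl⟩, hxf⟩ := hx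
  obtain ⟨t, ht, rfl⟩ := List.mem_map.1 hxf
  cases t with
  | null n => exact ⟨r n, rfl, Or.inr ⟨n, rfl⟩⟩
  | const c => exact ⟨c, rfl, Or.inl ⟨f, hfK, ht⟩⟩

end Aux5
end DE
/-- for a positive query, the supported certain answers equal the
null-free answers on a universal solution. -/
theorem scert_eq_nullfree_answers_on_universal {R C : Type} [Infinite C]
    (S : DE.Setting R C) (hS : S.wf)
    (Q : List (DE.CQ R C)) (hQ : ∀ q ∈ Q, q.safe)
    (I : DE.Instance R C) (hInf : DE.nullFree I) (hIfin : I.Finite)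
    (J : DE.Instance R C) (hU : DE.universalSolution S I J) :
    DE.scert S I Q =
      {t | t ∈ DE.evalUCQ Q J ∧ ∀ x ∈ t, ∃ c : C, x = DE.Term.const c} := by
  classical
  open DE in
  ext t
  simp only [Set.mem_setOf_eq]
  constructor
  · intro ht
    have hJfin : J.Finite := hU.1.1
    set A : Set C := ((constsOfSetting S ∪ constsOfInstance I) ∪ constsOfInstance J) ∪
      {c | ∃ q ∈ Q, c ∈ constsOfAtoms q.body} with hA
    have hAfin : A.Finite := by
      refine (((finite_constsOfSetting S).union (finite_constsOfInstance hIfin)).union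
        (finite_constsOfInstance hJfin)).union ?_
      apply Set.Finite.subset
        (Set.Finite.biUnion (Q.finite_toSet) (fun q _ => finite_constsOfAtoms q.body))
      rintro c ⟨q, hq, hc⟩
      exact Set.mem_biUnion hq hc
    have hAinf := hAfin.infinite_compl
    set e := hAinf.natEmbedding with he
    set r0 : ℕ → C := fun n => (e (2*n)).1 with hr0def
    set r1 : ℕ → C := fun n => (e (2*n+1)).1 with hr1def
    have hr0inj : Function.Injective r0 := by
      intro a b hab
      have := e.injective (Subtype.ext hab)
      omega
    have hr1inj : Function.Injective r1 := by
      intro a b hab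
      have := e.injective (Subtype.ext hab)
      omega
    have hnotr0 : ∀ c ∈ A, c ∉ Set.range r0 := by
      rintro c hc ⟨n, rfl⟩
      exact (e (2*n)).2 hc
    have hnotr1 : ∀ c ∈ A, c ∉ Set.range r1 := by
      rintro c hc ⟨n, rfl⟩
      exact (e (2*n+1)).2 hc
    have hSA : ∀ c ∈ constsOfSetting S, c ∈ A := fun c hc => Or.inl (Or.inl (Or.inl hc))
    have hIA : ∀ c ∈ constsOfInstance I, c ∈ A := fun c hc => Or.inl (Or.inl (Or.inr hc))
    have hJA : ∀ c ∈ constsOfInstance J, c ∈ A := fun c hc => Or.inl (Or.inr hc)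
    have hQA : ∀ q ∈ Q, ∀ c ∈ constsOfAtoms q.body, c ∈ A :=
      fun q hq c hc => Or.inr ⟨q, hq, hc⟩
    -- two renamed classical solutions and supported subsolutions
    have hcl0 : classicalSolution S I ((renameFact r0) '' J) :=
      classicalSolution_rename hInf hr0inj (fun c hc => hnotr0 c (hSA c hc))
        (fun c hc => hnotr0 c (hIA c hc)) (fun c hc => hnotr0 c (hJA c hc)) hU.1
    have hcl1 : classicalSolution S I ((renameFact r1) '' J) :=
      classicalSolution_rename hInf hr1inj (fun c hc => hnotr1 c (hSA c hc))
        (fun c hc => hnotr1 c (hIA c hc)) (fun c hc => hnotr1 c (hJA c hc)) hU.1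
    obtain ⟨K0', hK0sub, hK0sup⟩ :=
      exists_supported_subset hS hInf hcl0 (nullFree_rename r0 J)
    obtain ⟨K1', hK1sub, hK1sup⟩ :=
      exists_supported_subset hS hInf hcl1 (nullFree_rename r1 J)
    have ht0 : t ∈ evalUCQ Q ((renameFact r0) '' J) := evalUCQ_mono hK0sub (ht K0' hK0sup)
    have ht1 : t ∈ evalUCQ Q ((renameFact r1) '' J) := evalUCQ_mono hK1sub (ht K1' hK1sup)
    obtain ⟨q0, hq0, h0, hb0, hteq0⟩ := ht0
    obtain ⟨q1, hq1, h1, hb1, hteq1⟩ := ht1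
    have key : ∀ (r : ℕ → C) (q : CQ R C), q ∈ Q → ∀ h : Var → Term C,
        holdsBody ((renameFact r) '' J) h q.body → ∀ x ∈ q.free.map h,
        ∃ c, x = Term.const c ∧ (c ∈ constsOfInstance J ∨ c ∈ Set.range r) := by
      intro r q hq h hb x hx
      obtain ⟨v, hv, rfl⟩ := List.mem_map.1 hx
      obtain ⟨a, ha, hva⟩ := hQ q hq v hv
      exact adom_rename ⟨applyAtom h a, hb a ha, mem_args_applyAtom hva⟩
    have hent : ∀ x ∈ t, ∃ c, x = Term.const c ∧ c ∈ constsOfInstance J := by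
      intro x hx
      obtain ⟨c, rfl, hc0⟩ := key r0 q0 hq0 h0 hb0 x (hteq0 ▸ hx)
      obtain ⟨c', hc', hc1⟩ := key r1 q1 hq1 h1 hb1 _ (hteq1 ▸ hx)
      have hcc : c = c' := term_const_inj hc'
      rcases hc0 with h0J | h0r
      · exact ⟨c, rfl, h0J⟩
      rcases hc1 with h1J | h1r
      · exact ⟨c, rfl, hcc ▸ h1J⟩
      exfalso
      obtain ⟨n, hn⟩ := h0r
      obtain ⟨m, hm⟩ := h1r
      have : r0 n = r1 m := by rw [hn, hm, hcc]
      have := e.injective (Subtype.ext this)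
      omega
    refine ⟨⟨q0, hq0, gInv r0 ∘ h0, ?_, ?_⟩,
      fun x hx => ⟨(hent x hx).choose, (hent x hx).choose_spec.1⟩⟩
    · exact holdsBody_gInv hr0inj (fun c hc => hnotr0 c (hJA c hc))
        (fun c hc => hnotr0 c (hQA q0 hq0 c hc)) hb0
    · rw [hteq0]
      apply List.map_congr_left
      intro v hv
      have hxv : h0 v ∈ t := by
        rw [hteq0]
        exact List.mem_map.2 ⟨v, hv, rfl⟩
      obtain ⟨c, hc, hcJ⟩ := hent _ hxv
      show h0 v = gInv r0 (h0 v)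
      rw [hc, gInv_const_of_not (hnotr0 c (hJA c hcJ))]
  · rintro ⟨hev, hnf⟩ Js hsup
    have hcl := classical_of_supported hS hInf hsup
    obtain ⟨φ, hφc, hφm⟩ := hU.2 Js hcl
    obtain ⟨q, hq, h, hb, hteq⟩ := hev
    refine ⟨q, hq, φ ∘ h, ?_, ?_⟩
    · intro a ha
      have keyc : applyAtom (φ ∘ h) a = mapFact φ (applyAtom h a) := by
        unfold applyAtom mapFact
        simp only [List.map_map, Fact.mk.injEq, true_and]
        apply List.map_congr_left
        intro x hx
        cases x with
        | inl v => rfl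
        | inr c => exact (hφc c).symm
      rw [keyc]
      exact hφm _ (hb a ha)
    · rw [hteq]
      apply List.map_congr_left
      intro v hv
      have hxv : h v ∈ t := by
        rw [hteq]
        exact List.mem_map.2 ⟨v, hv, rfl⟩
      obtain ⟨c, hc⟩ := hnf _ hxv
      show h v = φ (h v)
      rw [hc, hφc c]
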